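/- Let x and y be two variational Nash equilibria of an I-player congestion game in which each c_t is β-strictly increasing, each u_i is concave, subgradients of c_t along feasible aggregates are bounded by C, and each X_i is contained in the ball of radius M/I. Then the aggregate profiles X = Σ_i x_i and Y = Σ_i y_i satisfy ‖X − Y‖ ≤ 2M √(TC/(βI)). -/

import Mathlib

open scoped RealInnerProductSpace BigOperators

noncomputable section

def cvec {T : ℕ} (c : Fin T → ℝ → ℝ) (X : EuclideanSpace ℝ (Fin T)) :
    EuclideanSpace ℝ (Fin T) :=
  WithLp.toLp 2 (fun t => c t (X t))

def subdiff {T : ℕ} (f : EuclideanSpace ℝ (Fin T) → ℝ) (x : EuclideanSpace ℝ (Fin T)) :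
    Set (EuclideanSpace ℝ (Fin T)) :=
  {g | ∀ y, f x + ⟪g, y - x⟫ ≤ f y}

def subdiffR (f : ℝ → ℝ) (x : ℝ) : Set ℝ :=
  {a | ∀ y, f x + a * (y - x) ≤ f y}

/-- The set `H(x)` of joint subgradients for the atomic game. -/
def Hmap {I T : ℕ} (c : Fin T → ℝ → ℝ) (u : Fin I → EuclideanSpace ℝ (Fin T) → ℝ)
    (x : Fin I → EuclideanSpace ℝ (Fin T)) :
    Set (Fin I → EuclideanSpace ℝ (Fin T)) :=
  {g | ∀ i, ∃ a : Fin T → ℝ, (∀ t, a t ∈ subdiffR (c t) ((∑ j, x j) t)) ∧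
      ∃ gu ∈ subdiff (fun z => - u i z) (x i),
        g i = (cvec c (∑ j, x j) + (WithLp.equiv 2 (Fin T → ℝ)).symm (fun t => a t * x i t)) + gu}

/-- The set `H'(x)` of joint subgradients for the nonatomic game. -/
def Hmap' {I T : ℕ} (c : Fin T → ℝ → ℝ) (u : Fin I → EuclideanSpace ℝ (Fin T) → ℝ)
    (x : Fin I → EuclideanSpace ℝ (Fin T)) :
    Set (Fin I → EuclideanSpace ℝ (Fin T)) :=
  {g | ∀ i, ∃ gu ∈ subdiff (fun z => - u i z) (x i), g i = cvec c (∑ j, x j) + gu}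

/-- Variational Nash equilibrium on the coupled feasible set. -/
def isVNE {I T : ℕ} (X : Fin I → Set (EuclideanSpace ℝ (Fin T)))
    (A : Set (EuclideanSpace ℝ (Fin T))) (c : Fin T → ℝ → ℝ)
    (u : Fin I → EuclideanSpace ℝ (Fin T) → ℝ)
    (x : Fin I → EuclideanSpace ℝ (Fin T)) : Prop :=
  (∀ i, x i ∈ X i) ∧ (∑ i, x i) ∈ A ∧
    ∃ g ∈ Hmap c u x, ∀ z : Fin I → EuclideanSpace ℝ (Fin T),
      (∀ i, z i ∈ X i) → (∑ i, z i) ∈ A → 0 ≤ ∑ i, ⟪g i, z i - x i⟫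

/-- Symmetric variational Wardrop equilibrium on the coupled feasible set. -/
def isSVWE {I T : ℕ} (X : Fin I → Set (EuclideanSpace ℝ (Fin T)))
    (A : Set (EuclideanSpace ℝ (Fin T))) (c : Fin T → ℝ → ℝ)
    (u : Fin I → EuclideanSpace ℝ (Fin T) → ℝ)
    (x : Fin I → EuclideanSpace ℝ (Fin T)) : Prop :=
  (∀ i, x i ∈ X i) ∧ (∑ i, x i) ∈ A ∧
    ∃ g ∈ Hmap' c u x, ∀ z : Fin I → EuclideanSpace ℝ (Fin T),
      (∀ i, z i ∈ X i) → (∑ i, z i) ∈ A → 0 ≤ ∑ i, ⟪g i, z i - x i⟫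

lemma euclid_inner_eq_sum {T : ℕ} (v w : EuclideanSpace ℝ (Fin T)) :
    ⟪v, w⟫ = ∑ t, v t * w t := by
  simp [PiLp.inner_apply, RCLike.inner_apply, conj_trivial]
  exact Finset.sum_congr rfl fun t _ => mul_comm _ _

lemma euclid_abs_coord_le {T : ℕ} (v : EuclideanSpace ℝ (Fin T)) (t : Fin T) : |v t| ≤ ‖v‖ := by
  rw [EuclideanSpace.norm_eq]
  calc |v t| = Real.sqrt (‖v t‖^2) := by rw [Real.sqrt_sq_eq_abs]; simp [Real.norm_eq_abs]
    _ ≤ Real.sqrt (∑ i, ‖v i‖^2) := Real.sqrt_le_sqrt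
        (Finset.single_le_sum (f := fun i => ‖v i‖^2) (fun i _ => by positivity) (Finset.mem_univ t))

lemma subdiff_mono {T : ℕ} (f : EuclideanSpace ℝ (Fin T) → ℝ)
    (p q gp gq : EuclideanSpace ℝ (Fin T))
    (hp : gp ∈ subdiff f p) (hq : gq ∈ subdiff f q) :
    ⟪gp - gq, q - p⟫ ≤ 0 := by
  have h1 := hp q
  have h2 := hq p
  have e : ⟪gq, p - q⟫ = -⟪gq, q - p⟫ := by
    rw [show p - q = -(q - p) by abel, inner_neg_right]
  rw [inner_sub_left]
  linarith

lemma prod_bound {A B X Y C m : ℝ} (hA : |A| ≤ C) (hB : |B| ≤ C)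
    (hX : |X| ≤ m) (hY : |Y| ≤ m) : (A*X - B*Y)*(Y - X) ≤ 4*C*m^2 := by
  have hC0 : 0 ≤ C := (abs_nonneg A).trans hA
  have hm0 : 0 ≤ m := (abs_nonneg X).trans hX
  have h1 : |A*X - B*Y| ≤ 2*C*m := by
    have t1 : |A*X - B*Y| ≤ |A*X| + |B*Y| := by
      calc |A*X - B*Y| = |A*X + -(B*Y)| := by ring_nf
        _ ≤ |A*X| + |-(B*Y)| := abs_add_le _ _
        _ = |A*X| + |B*Y| := by rw [abs_neg]
    have t2 : |A*X| ≤ C*m := by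
      rw [abs_mul]; exact mul_le_mul hA hX (abs_nonneg _) hC0
    have t3 : |B*Y| ≤ C*m := by
      rw [abs_mul]; exact mul_le_mul hB hY (abs_nonneg _) hC0
    linarith
  have h2 : |Y - X| ≤ 2*m := by
    calc |Y - X| = |Y + -X| := by ring_nf
      _ ≤ |Y| + |-X| := abs_add_le _ _
      _ = |Y| + |X| := by rw [abs_neg]
      _ ≤ 2*m := by linarith
  calc (A*X - B*Y)*(Y - X) ≤ |(A*X - B*Y)*(Y - X)| := le_abs_self _
    _ = |A*X - B*Y| * |Y - X| := abs_mul _ _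
    _ ≤ (2*C*m)*(2*m) := mul_le_mul h1 h2 (abs_nonneg _) (by positivity)
    _ = 4*C*m^2 := by ring

/-- Two VNEs of a large congestion game with strictly increasing costs have
close aggregates. -/
theorem VNEs_close_aggregates {I T : ℕ} (hI : 0 < I)
    (X : Fin I → Set (EuclideanSpace ℝ (Fin T)))
    (hXconv : ∀ i, Convex ℝ (X i)) (hXcpt : ∀ i, IsCompact (X i))
    (A : Set (EuclideanSpace ℝ (Fin T))) (hAconv : Convex ℝ A) (hAcl : IsClosed A)
    (c : Fin T → ℝ → ℝ) (hcconv : ∀ t, ConvexOn ℝ Set.univ (c t))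
    (hcmono : ∀ t, Monotone (c t)) (hccont : ∀ t, Continuous (c t))
    (β : ℝ) (hβ : 0 < β)
    (hstrict : ∀ t, ∀ a b : ℝ, β * (a - b) ^ 2 ≤ (c t a - c t b) * (a - b))
    (u : Fin I → EuclideanSpace ℝ (Fin T) → ℝ) (hucont : ∀ i, Continuous (u i))
    (hu : ∀ i, ConcaveOn ℝ Set.univ (u i))
    (M C : ℝ)
    (hM : ∀ i, ∀ v ∈ X i, ‖v‖ ≤ M / I)
    (hC : ∀ z : Fin I → EuclideanSpace ℝ (Fin T), (∀ i, z i ∈ X i) →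
      ∀ t, ∀ a ∈ subdiffR (c t) ((∑ i, z i) t), |a| ≤ C)
    (x y : Fin I → EuclideanSpace ℝ (Fin T))
    (hx : isVNE X A c u x) (hy : isVNE X A c u y) :
    ‖(∑ i, x i) - (∑ i, y i)‖ ≤ 2 * M * Real.sqrt (T * C / (β * I)) := by
  obtain ⟨hxX, hxA, g, hg, hgVI⟩ := hx
  obtain ⟨hyX, hyA, h, hh, hhVI⟩ := hy
  choose a ha gu hgu hgeq using hg
  choose b hb gv hgv hheq using hh
  have hI' : (0:ℝ) < I := by exact_mod_cast hI
  set m : ℝ := M / I with hm_def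
  have hmx : ∀ i, ‖x i‖ ≤ m := fun i => hM i _ (hxX i)
  have hmy : ∀ i, ‖y i‖ ≤ m := fun i => hM i _ (hyX i)
  have hm0 : 0 ≤ m := (norm_nonneg (x ⟨0, hI⟩)).trans (hmx _)
  have hM0 : 0 ≤ M := by
    have h2 := mul_nonneg hm0 hI'.le
    rw [hm_def] at h2
    rwa [div_mul_cancel₀ M (ne_of_gt hI')] at h2
  set Xs := ∑ i, x i with hXs
  set Ys := ∑ i, y i with hYs
  have hsum : 0 ≤ ∑ i, ⟪g i, y i - x i⟫ + ∑ i, ⟪h i, x i - y i⟫ :=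
    add_nonneg (hgVI y hyX hyA) (hhVI x hxX hxA)
  have hdecomp : ∀ i : Fin I, ⟪g i, y i - x i⟫ + ⟪h i, x i - y i⟫ =
      ⟪cvec c Xs - cvec c Ys, y i - x i⟫
      + ⟪((WithLp.equiv 2 (Fin T → ℝ)).symm fun t => a i t * x i t)
          - ((WithLp.equiv 2 (Fin T → ℝ)).symm fun t => b i t * y i t), y i - x i⟫
      + ⟪gu i - gv i, y i - x i⟫ := by
    intro i
    rw [hgeq i, hheq i, show x i - y i = -(y i - x i) by abel]
    simp only [inner_add_left, inner_sub_left, inner_neg_right]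
    ring
  have hsplit : ∑ i, ⟪g i, y i - x i⟫ + ∑ i, ⟪h i, x i - y i⟫
      = ∑ i, ⟪cvec c Xs - cvec c Ys, y i - x i⟫
      + ∑ i, ⟪((WithLp.equiv 2 (Fin T → ℝ)).symm fun t => a i t * x i t)
          - ((WithLp.equiv 2 (Fin T → ℝ)).symm fun t => b i t * y i t), y i - x i⟫
      + ∑ i, ⟪gu i - gv i, y i - x i⟫ := by
    rw [← Finset.sum_add_distrib, ← Finset.sum_add_distrib, ← Finset.sum_add_distrib]
    exact Finset.sum_congr rfl fun i _ => hdecomp i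
  have hterm1 : ∑ i : Fin I, ⟪cvec c Xs - cvec c Ys, y i - x i⟫
      = - ⟪cvec c Xs - cvec c Ys, Xs - Ys⟫ := by
    rw [← inner_sum, show (∑ i : Fin I, (y i - x i)) = -(Xs - Ys) by
      rw [Finset.sum_sub_distrib]; abel, inner_neg_right]
  have hstrong : β * ‖Xs - Ys‖^2 ≤ ⟪cvec c Xs - cvec c Ys, Xs - Ys⟫ := by
    rw [euclid_inner_eq_sum]
    have hnorm : ‖Xs - Ys‖^2 = ∑ t, (Xs t - Ys t)^2 := by
      rw [← real_inner_self_eq_norm_sq, euclid_inner_eq_sum]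
      exact Finset.sum_congr rfl fun t _ => by rw [PiLp.sub_apply]; ring
    rw [hnorm, Finset.mul_sum]
    refine Finset.sum_le_sum fun t _ => ?_
    have ht := hstrict t (Xs t) (Ys t)
    simp only [PiLp.sub_apply]
    simpa [cvec] using ht
  have hterm2 : ∀ i : Fin I,
      ⟪((WithLp.equiv 2 (Fin T → ℝ)).symm fun t => a i t * x i t)
        - ((WithLp.equiv 2 (Fin T → ℝ)).symm fun t => b i t * y i t), y i - x i⟫
      ≤ (T : ℝ) * (4*C*m^2) := by
    intro i
    rw [euclid_inner_eq_sum]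
    have step : ∀ t : Fin T,
        (((WithLp.equiv 2 (Fin T → ℝ)).symm fun t => a i t * x i t)
          - ((WithLp.equiv 2 (Fin T → ℝ)).symm fun t => b i t * y i t)) t * (y i - x i) t
        ≤ 4*C*m^2 := by
      intro t
      have hA : |a i t| ≤ C := hC x hxX t _ (ha i t)
      have hB : |b i t| ≤ C := hC y hyX t _ (hb i t)
      have hX' : |x i t| ≤ m := (euclid_abs_coord_le (x i) t).trans (hmx i)
      have hY' : |y i t| ≤ m := (euclid_abs_coord_le (y i) t).trans (hmy i)
      have hpb := prod_bound hA hB hX' hY'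
      simpa [PiLp.sub_apply, WithLp.equiv_symm_apply] using hpb
    refine le_trans (Finset.sum_le_sum fun t _ => step t) ?_
    simp [Finset.sum_const, Finset.card_univ, nsmul_eq_mul]
  have hterm3 : ∀ i : Fin I, ⟪gu i - gv i, y i - x i⟫ ≤ 0 := fun i =>
    subdiff_mono (fun z => - u i z) (x i) (y i) (gu i) (gv i) (hgu i) (hgv i)
  have hkey : β * ‖Xs - Ys‖^2 ≤ (I : ℝ) * ((T : ℝ) * (4*C*m^2)) := by
    have hs2 : ∑ i : Fin I,
        ⟪((WithLp.equiv 2 (Fin T → ℝ)).symm fun t => a i t * x i t)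
          - ((WithLp.equiv 2 (Fin T → ℝ)).symm fun t => b i t * y i t), y i - x i⟫
        ≤ (I : ℝ) * ((T : ℝ) * (4*C*m^2)) := by
      refine le_trans (Finset.sum_le_sum fun i _ => hterm2 i) ?_
      simp [Finset.sum_const, Finset.card_univ, nsmul_eq_mul]
    have hs3 : ∑ i : Fin I, ⟪gu i - gv i, y i - x i⟫ ≤ 0 :=
      Finset.sum_nonpos fun i _ => hterm3 i
    rw [hsplit, hterm1] at hsum
    linarith
  have hfin : ‖Xs - Ys‖^2 ≤ 4*M^2*((T:ℝ)*C/(β*I)) := by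
    rw [hm_def] at hkey
    have h1 : ‖Xs - Ys‖^2 ≤ ((I : ℝ) * ((T : ℝ) * (4*C*(M/I)^2)))/β := by
      rw [le_div_iff₀ hβ]; linarith
    refine h1.trans (le_of_eq ?_)
    field_simp
  calc ‖Xs - Ys‖ = Real.sqrt (‖Xs - Ys‖^2) := (Real.sqrt_sq (norm_nonneg _)).symm
    _ ≤ Real.sqrt (4*M^2*((T:ℝ)*C/(β*I))) := Real.sqrt_le_sqrt hfin
    _ = 2*M*Real.sqrt ((T:ℝ)*C/(β*I)) := by
        rw [show (4:ℝ)*M^2 = (2*M)^2 by ring, Real.sqrt_mul (sq_nonneg _),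
          Real.sqrt_sq (by linarith : (0:ℝ) ≤ 2*M)]
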